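/- Let G = (V,E) be a finite connected simple graph with at least one edge, and consider the simple random walk started at any vertex u ∈ V with cover time T = inf{ t : {w_0,…,w_t} = V }. Then P[T ≤ 4·|V|·|E|] > 0. Consequently, G possesses a walk of length at most 4·|V|·|E| that visits every vertex of G, and for every integer ℓ ≥ 4·|V|·|E| there exists a walk of length exactly ℓ that visits every vertex of G. -/

import Mathlib

open MeasureTheory

open SimpleGraph in
private lemma cover_walk_aux
    {V : Type*} [Fintype V] [DecidableEq V]
    (G : SimpleGraph V) [DecidableRel G.Adj]
    (hconn : G.Connected) (u : V) (l : List V) :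
    ∃ v, ∃ p : G.Walk u v, p.length ≤ l.length * G.edgeFinset.card ∧
      ∀ x ∈ l, x ∈ p.support := by
  induction l with
  | nil => exact ⟨u, Walk.nil, by simp, by simp⟩
  | cons a l ih =>
    obtain ⟨v, p, hlen, hsup⟩ := ih
    obtain ⟨q⟩ := hconn v a
    refine ⟨a, p.append q.toPath.val, ?_, ?_⟩
    · rw [Walk.length_append]
      have hq : (q.toPath.val).length ≤ G.edgeFinset.card :=
        q.toPath.prop.isTrail.length_le_card_edgeFinset
      rw [List.length_cons, Nat.succ_mul]
      omega
    · intro x hx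
      rcases List.mem_cons.mp hx with h | h
      · subst h
        exact Walk.subset_support_append_right _ _ (Walk.end_mem_support _)
      · exact Walk.subset_support_append_left _ _ (hsup x h)

open SimpleGraph in
private lemma exists_adj_of_connected
    {V : Type*} [Fintype V] [DecidableEq V]
    (G : SimpleGraph V) [DecidableRel G.Adj]
    (hconn : G.Connected) (hedge : 0 < G.edgeFinset.card) (v : V) :
    ∃ x, G.Adj v x := by
  obtain ⟨e, he⟩ := Finset.card_pos.mp hedge
  induction e with
  | _ a b =>
    rw [SimpleGraph.mem_edgeFinset, SimpleGraph.mem_edgeSet] at he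
    by_cases hva : v = a
    · exact ⟨b, hva ▸ he⟩
    · obtain ⟨q⟩ := hconn v a
      exact ⟨q.getVert 1, Walk.adj_snd (Walk.not_nil_of_ne hva)⟩

open SimpleGraph in
private lemma cover_fun_exists
    {V : Type*} [Fintype V] [DecidableEq V]
    (G : SimpleGraph V) [DecidableRel G.Adj]
    (hconn : G.Connected) (hedge : 0 < G.edgeFinset.card) (u : V)
    (ℓ : ℕ) (hℓ : 4 * Fintype.card V * G.edgeFinset.card ≤ ℓ) :
    ∃ w : ℕ → V, w 0 = u ∧ (∀ i < ℓ, G.Adj (w i) (w (i + 1))) ∧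
      ∀ v : V, ∃ i ≤ ℓ, w i = v := by
  obtain ⟨v, p, hlen, hsup⟩ := cover_walk_aux G hconn u Finset.univ.toList
  obtain ⟨x, hvx⟩ := exists_adj_of_connected G hconn hedge v
  set k := p.length with hk
  have hkℓ : k ≤ ℓ := by
    refine le_trans (le_trans hlen ?_) hℓ
    rw [Finset.length_toList, Finset.card_univ]
    exact Nat.mul_le_mul_right _ (by omega)
  refine ⟨fun i => if i ≤ k then p.getVert i else if Even (i - k) then v else x,
    by simp [p.getVert_zero], ?_, ?_⟩
  · intro i hi
    by_cases h1 : i + 1 ≤ k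
    · have h0 : i ≤ k := by omega
      have hik : i < p.length := by omega
      simp only [if_pos h0, if_pos h1]
      exact p.adj_getVert_succ hik
    · by_cases h0 : i ≤ k
      · have hik : i = k := by omega
        have h2 : i + 1 - k = 1 := by omega
        have hgv : p.getVert i = v := by rw [hik]; exact p.getVert_length
        simp only [if_pos h0, if_neg h1, h2, hgv]
        simpa [Nat.not_even_one] using hvx
      · have h2 : i + 1 - k = (i - k) + 1 := by omega
        simp only [if_neg h0, if_neg h1, h2]
        by_cases he : Even (i - k)
        · have : ¬ Even (i - k + 1) := by simp [Nat.even_add_one, he]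
          simp [he, this]
          exact hvx
        · have : Even (i - k + 1) := by simp [Nat.even_add_one, he]
          simp [he, this]
          exact hvx.symm
  · intro w
    have hw : w ∈ p.support := hsup w (by simp)
    obtain ⟨n, hn, hnl⟩ := Walk.mem_support_iff_exists_getVert.mp hw
    exact ⟨n, le_trans hnl hkℓ, by simp [show n ≤ k from hnl, hn]⟩

/-- For the simple random walk on a finite connected simple graph with at least one
edge, the probability that the cover time is at most `4·|V|·|E|` is positive.
Consequently, the graph possesses a walk of length at most `4·|V|·|E|` visiting every
vertex, and for every `ℓ ≥ 4·|V|·|E|` a walk of length exactly `ℓ` visiting every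
vertex. -/
theorem cover_walk_exists
    {V : Type*} [Fintype V] [DecidableEq V]
    [MeasurableSpace V] [MeasurableSingletonClass V]
    (G : SimpleGraph V) [DecidableRel G.Adj]
    (hconn : G.Connected)
    (hedge : 0 < G.edgeFinset.card)
    (u : V)
    (μ : Measure (ℕ → V)) [IsProbabilityMeasure μ]
    (P : V → V → ENNReal)
    (hP : ∀ a b : V, P a b = if G.Adj a b then ((G.degree a : ENNReal))⁻¹ else 0)
    (hμ : ∀ (t : ℕ) (w : ℕ → V),
      μ {ω | ∀ i ≤ t, ω i = w i} =
        (if w 0 = u then 1 else 0) * ∏ i ∈ Finset.range t, P (w i) (w (i + 1))) :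
    (0 < μ {ω | ∃ t ≤ 4 * Fintype.card V * G.edgeFinset.card,
        ∀ v : V, ∃ i ≤ t, ω i = v}) ∧
    (∃ k ≤ 4 * Fintype.card V * G.edgeFinset.card, ∃ w : ℕ → V,
        (∀ i < k, G.Adj (w i) (w (i + 1))) ∧ ∀ v : V, ∃ i ≤ k, w i = v) ∧
    (∀ ℓ : ℕ, 4 * Fintype.card V * G.edgeFinset.card ≤ ℓ → ∃ w : ℕ → V,
        (∀ i < ℓ, G.Adj (w i) (w (i + 1))) ∧ ∀ v : V, ∃ i ≤ ℓ, w i = v) := by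
  set N := 4 * Fintype.card V * G.edgeFinset.card with hN
  obtain ⟨w, hw0, hadj, hcov⟩ := cover_fun_exists G hconn hedge u N le_rfl
  refine ⟨?_, ⟨N, le_rfl, w, hadj, hcov⟩, fun ℓ hℓ => ?_⟩
  · have hsub : {ω : ℕ → V | ∀ i ≤ N, ω i = w i} ⊆
        {ω | ∃ t ≤ N, ∀ v : V, ∃ i ≤ t, ω i = v} := by
      intro ω hω
      refine ⟨N, le_rfl, fun v => ?_⟩
      obtain ⟨i, hi, hwi⟩ := hcov v
      exact ⟨i, hi, (hω i hi).trans hwi⟩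
    refine lt_of_lt_of_le ?_ (measure_mono hsub)
    rw [hμ N w, hw0, if_pos rfl, one_mul]
    rw [pos_iff_ne_zero]
    rw [Finset.prod_ne_zero_iff]
    intro i hi
    rw [Finset.mem_range] at hi
    rw [hP, if_pos (hadj i hi)]
    exact ENNReal.inv_ne_zero.mpr (ENNReal.natCast_ne_top _)
  · obtain ⟨w, _, hadj, hcov⟩ := cover_fun_exists G hconn hedge u ℓ hℓ
    exact ⟨w, hadj, hcov⟩
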